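/- arXiv:nlin/0608009 — 2 statements merged into one kernel-verified Lean document; each statement's English description precedes it below -/
import Mathlib

section
/- Let w : ℝ → ℝ³ be twice differentiable with w(t) ≠ 0, dw/dt = a, d²w/dt² = b. Define α_a = (ŵ·a)/|w|, χ_a = (ŵ×a)/|w|, α_b = (ŵ·b)/|w|, χ_b = (ŵ×b)/|w|, and the quaternions 𝔮_a = [α_a, χ_a], 𝔮_b = [α_b, χ_b]. Then (d𝔮_a/dt + 𝔮_a⊛𝔮_a − 𝔮_b)⊛[0,w] = 0. -/
open Matrix

/-- The quaternion product in scalar-vector form. -/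
noncomputable def qmul (a b : ℝ × (Fin 3 → ℝ)) : ℝ × (Fin 3 → ℝ) :=
  (a.1 * b.1 - a.2 ⬝ᵥ b.2, a.1 • b.2 + b.1 • a.2 + a.2 ⨯₃ b.2)

/-- The Euclidean norm of a vector in `ℝ³`. -/
noncomputable def norm3 (v : Fin 3 → ℝ) : ℝ := Real.sqrt (v ⬝ᵥ v)

set_option maxHeartbeats 4000000 in
/-- For a twice differentiable nonvanishing curve `w` with `dw/dt = a`, `d²w/dt² = b`,
and quaternions `𝔮_a = [α_a,χ_a]`, `𝔮_b = [α_b,χ_b]` built from the alignment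
decompositions of `a` and `b`, one has `(d𝔮_a/dt + 𝔮_a⊛𝔮_a − 𝔮_b)⊛[0,w] = 0`. -/
theorem riccati_times_w (w a b : ℝ → Fin 3 → ℝ)
    (hne : ∀ t, w t ≠ 0)
    (ha : ∀ t, HasDerivAt w (a t) t)
    (hb : ∀ t, HasDerivAt a (b t) t) :
    let what : ℝ → Fin 3 → ℝ := fun t => (norm3 (w t))⁻¹ • w t
    let αa : ℝ → ℝ := fun t => (what t ⬝ᵥ a t) / norm3 (w t)
    let χa : ℝ → Fin 3 → ℝ := fun t => (norm3 (w t))⁻¹ • (what t ⨯₃ a t)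
    let αb : ℝ → ℝ := fun t => (what t ⬝ᵥ b t) / norm3 (w t)
    let χb : ℝ → Fin 3 → ℝ := fun t => (norm3 (w t))⁻¹ • (what t ⨯₃ b t)
    ∀ t : ℝ,
      qmul (deriv αa t + (qmul (αa t, χa t) (αa t, χa t)).1 - αb t,
            deriv χa t + (qmul (αa t, χa t) (αa t, χa t)).2 - χb t)
        ((0 : ℝ), w t) = (0, 0) := by
  intro what αa χa αb χb t
  have hpos : ∀ u, 0 < w u ⬝ᵥ w u := by
    intro u
    have h0 : 0 ≤ w u ⬝ᵥ w u := Finset.sum_nonneg fun i _ => mul_self_nonneg _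
    rcases h0.lt_or_eq with h | h
    · exact h
    · exact absurd (dotProduct_self_eq_zero.mp h.symm) (hne u)
  have hns : ∀ u, norm3 (w u) * norm3 (w u) = w u ⬝ᵥ w u := fun u =>
    Real.mul_self_sqrt (hpos u).le
  have hn0 : ∀ u, norm3 (w u) ≠ 0 := fun u =>
    ne_of_gt (Real.sqrt_pos.mpr (hpos u))
  have hcs : ∀ (c : ℝ) (u v : Fin 3 → ℝ), (c • u) ⨯₃ v = c • (u ⨯₃ v) := by
    intro c u v
    rw [_root_.map_smul, LinearMap.smul_apply]
  -- rewrite the quaternion data in terms of s = w ⬝ᵥ w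
  have hαa : αa = fun u => (w u ⬝ᵥ a u) / (w u ⬝ᵥ w u) := by
    funext u
    simp only [αa, what, smul_dotProduct, smul_eq_mul, ← hns u]
    field_simp [hn0 u]
  have hχa : χa = fun u => (w u ⬝ᵥ w u)⁻¹ • (w u ⨯₃ a u) := by
    funext u
    simp only [χa, what, hcs, smul_smul, ← hns u, mul_inv]
  have hαb : αb t = (w t ⬝ᵥ b t) / (w t ⬝ᵥ w t) := by
    simp only [αb, what, smul_dotProduct, smul_eq_mul, ← hns t]
    field_simp [hn0 t]
  have hχb : χb t = (w t ⬝ᵥ w t)⁻¹ • (w t ⨯₃ b t) := by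
    simp only [χb, what, hcs, smul_smul, ← hns t, mul_inv]
  -- coordinate derivatives
  have hw : ∀ i, HasDerivAt (fun u => w u i) (a t i) t := fun i =>
    hasDerivAt_pi.mp (ha t) i
  have hA : ∀ i, HasDerivAt (fun u => a u i) (b t i) t := fun i =>
    hasDerivAt_pi.mp (hb t) i
  have hdwa : HasDerivAt (fun u => w u ⬝ᵥ a u) (a t ⬝ᵥ a t + w t ⬝ᵥ b t) t := by
    simp only [dotProduct, Fin.sum_univ_three]
    have := (((hw 0).fun_mul (hA 0)).fun_add ((hw 1).fun_mul (hA 1))).fun_add ((hw 2).fun_mul (hA 2))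
    exact this.congr_deriv (by ring)
  have hds : HasDerivAt (fun u => w u ⬝ᵥ w u) (2 * (w t ⬝ᵥ a t)) t := by
    simp only [dotProduct, Fin.sum_univ_three]
    have := (((hw 0).fun_mul (hw 0)).fun_add ((hw 1).fun_mul (hw 1))).fun_add ((hw 2).fun_mul (hw 2))
    exact this.congr_deriv (by ring)
  have hs0 : w t ⬝ᵥ w t ≠ 0 := ne_of_gt (hpos t)
  have hdx : ∀ i, HasDerivAt (fun u => (w u ⨯₃ a u) i)
      ((a t ⨯₃ a t) i + (w t ⨯₃ b t) i) t := by
    have e : ∀ u v : ℝ → Fin 3 → ℝ, ∀ u' : Fin 3 → ℝ, ∀ s : ℝ,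
        (u s ⨯₃ v s) = ![u s 1 * v s 2 - u s 2 * v s 1, u s 2 * v s 0 - u s 0 * v s 2,
          u s 0 * v s 1 - u s 1 * v s 0] := fun u v _ s => cross_apply (u s) (v s)
    intro i
    have h0 : HasDerivAt (fun u => w u 1 * a u 2 - w u 2 * a u 1)
        ((a t 1 * a t 2 - a t 2 * a t 1) + (w t 1 * b t 2 - w t 2 * b t 1)) t := by
      have := (((hw 1).fun_mul (hA 2)).fun_sub ((hw 2).fun_mul (hA 1)))
      exact this.congr_deriv (by ring)
    have h1 : HasDerivAt (fun u => w u 2 * a u 0 - w u 0 * a u 2)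
        ((a t 2 * a t 0 - a t 0 * a t 2) + (w t 2 * b t 0 - w t 0 * b t 2)) t := by
      have := (((hw 2).fun_mul (hA 0)).fun_sub ((hw 0).fun_mul (hA 2)))
      exact this.congr_deriv (by ring)
    have h2 : HasDerivAt (fun u => w u 0 * a u 1 - w u 1 * a u 0)
        ((a t 0 * a t 1 - a t 1 * a t 0) + (w t 0 * b t 1 - w t 1 * b t 0)) t := by
      have := (((hw 0).fun_mul (hA 1)).fun_sub ((hw 1).fun_mul (hA 0)))
      exact this.congr_deriv (by ring)
    fin_cases i <;>
      simp only [cross_apply, Fin.zero_eta, Fin.mk_one, Matrix.cons_val_zero,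
        Matrix.cons_val_one, Matrix.head_cons, Fin.isValue] <;>
      first
      | exact h0
      | exact h1
      | exact h2
  have hαa' : HasDerivAt αa
      (((a t ⬝ᵥ a t + w t ⬝ᵥ b t) * (w t ⬝ᵥ w t)
        - (w t ⬝ᵥ a t) * (2 * (w t ⬝ᵥ a t))) / (w t ⬝ᵥ w t) ^ 2) t := by
    rw [hαa]; exact hdwa.div hds hs0
  have hχa' : HasDerivAt χa (fun i =>
      (((a t ⨯₃ a t) i + (w t ⨯₃ b t) i) * (w t ⬝ᵥ w t)
        - (w t ⨯₃ a t) i * (2 * (w t ⬝ᵥ a t))) / (w t ⬝ᵥ w t) ^ 2) t := by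
    rw [hχa]
    refine hasDerivAt_pi.mpr fun i => ?_
    simp only [Pi.smul_apply, smul_eq_mul, inv_mul_eq_div]
    exact (hdx i).div hds hs0
  rw [hαa'.deriv, hχa'.deriv, hαb, hχb]
  have hv : ∀ u, αa u = (w u ⬝ᵥ a u) / (w u ⬝ᵥ w u) := fun u => by rw [hαa]
  have hv2 : ∀ u, χa u = (w u ⬝ᵥ w u)⁻¹ • (w u ⨯₃ a u) := fun u => by rw [hχa]
  rw [qmul, qmul]
  have hS : w t 0 * w t 0 + w t 1 * w t 1 + w t 2 * w t 2 ≠ 0 := by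
    simpa [dotProduct, Fin.sum_univ_three] using hs0
  refine Prod.ext ?_ ?_
  · show _ = (0:ℝ)
    simp only [hv, hv2, cross_apply, dotProduct, Fin.sum_univ_three,
      Pi.add_apply, Pi.smul_apply, Pi.sub_apply, smul_eq_mul,
      Matrix.cons_val_zero, Matrix.cons_val_one, Matrix.head_cons,
      Matrix.cons_val_two, Matrix.tail_cons, mul_zero, zero_mul]
    field_simp
    ring
  · show _ = (0 : Fin 3 → ℝ)
    funext i
    fin_cases i <;>
      simp only [hv, hv2, cross_apply, dotProduct, Fin.sum_univ_three,
        Pi.add_apply, Pi.smul_apply, Pi.sub_apply, Pi.zero_apply, smul_eq_mul,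
        Matrix.cons_val_zero, Matrix.cons_val_one, Matrix.head_cons,
        Matrix.cons_val_two, Matrix.tail_cons, Fin.zero_eta, Fin.mk_one,
        Fin.isValue, Fin.reduceFinMk, Matrix.cons_val, zero_mul, mul_zero, zero_smul, zero_add, add_zero] <;>
      · field_simp
        ring
end

section
/- Under the hypotheses of the quaternionic Riccati setup (w twice differentiable and nonzero, a = dw/dt, b = d²w/dt², 𝔮_a = [α_a,χ_a], 𝔮_b = [α_b,χ_b] defined as above), the Riccati relation holds: d𝔮_a/dt + 𝔮_a⊛𝔮_a = 𝔮_b. -/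
open Matrix

/-- For a twice differentiable nonvanishing curve `w` with `dw/dt = a`, `d²w/dt² = b`,
and quaternions `𝔮_a = [α_a,χ_a]`, `𝔮_b = [α_b,χ_b]` built from the alignment
decompositions of `a` and `b`, the Riccati relation `d𝔮_a/dt + 𝔮_a⊛𝔮_a = 𝔮_b` holds. -/
theorem riccati_relation (w a b : ℝ → Fin 3 → ℝ)
    (hne : ∀ t, w t ≠ 0)
    (ha : ∀ t, HasDerivAt w (a t) t)
    (hb : ∀ t, HasDerivAt a (b t) t) :
    let what : ℝ → Fin 3 → ℝ := fun t => (norm3 (w t))⁻¹ • w t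
    let αa : ℝ → ℝ := fun t => (what t ⬝ᵥ a t) / norm3 (w t)
    let χa : ℝ → Fin 3 → ℝ := fun t => (norm3 (w t))⁻¹ • (what t ⨯₃ a t)
    let αb : ℝ → ℝ := fun t => (what t ⬝ᵥ b t) / norm3 (w t)
    let χb : ℝ → Fin 3 → ℝ := fun t => (norm3 (w t))⁻¹ • (what t ⨯₃ b t)
    ∀ t : ℝ,
      (deriv αa t + (qmul (αa t, χa t) (αa t, χa t)).1,
       deriv χa t + (qmul (αa t, χa t) (αa t, χa t)).2) = (αb t, χb t) := by
  intro what αa χa αb χb t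
  have haw : ∀ s (i : Fin 3), HasDerivAt (fun u => w u i) (a s i) s :=
    fun s i => hasDerivAt_pi.mp (ha s) i
  have hab : ∀ s (i : Fin 3), HasDerivAt (fun u => a u i) (b s i) s :=
    fun s i => hasDerivAt_pi.mp (hb s) i
  set S : ℝ → ℝ := fun s => w s ⬝ᵥ w s with hSdef
  have hSpos : ∀ s, 0 < S s := by
    intro s
    have h0 : S s ≠ 0 := fun h => hne s (dotProduct_self_eq_zero.mp h)
    have h1 : 0 ≤ S s := Finset.sum_nonneg fun i _ => mul_self_nonneg _
    exact lt_of_le_of_ne h1 (Ne.symm h0)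
  have hSne : ∀ s, S s ≠ 0 := fun s => (hSpos s).ne'
  have hnpos : ∀ s, 0 < norm3 (w s) := fun s => Real.sqrt_pos.mpr (hSpos s)
  have hnne : ∀ s, norm3 (w s) ≠ 0 := fun s => (hnpos s).ne'
  have hm : ∀ s, norm3 (w s) * norm3 (w s) = S s :=
    fun s => Real.mul_self_sqrt (hSpos s).le
  -- expand dot products
  have hSexp : S = fun s => w s 0 * w s 0 + w s 1 * w s 1 + w s 2 * w s 2 := by
    funext s; simp [hSdef, dotProduct, Fin.sum_univ_three]
  set P : ℝ → ℝ := fun s => w s 0 * a s 0 + w s 1 * a s 1 + w s 2 * a s 2 with hPdef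
  have hS' : HasDerivAt S (2 * P t) t := by
    rw [hSexp]
    have := (((haw t 0).mul (haw t 0)).add ((haw t 1).mul (haw t 1))).add
      ((haw t 2).mul (haw t 2))
    refine this.congr_deriv ?_
    simp only [hPdef]
    ring
  have hP' : HasDerivAt P
      (a t 0 * a t 0 + a t 1 * a t 1 + a t 2 * a t 2
        + (w t 0 * b t 0 + w t 1 * b t 1 + w t 2 * b t 2)) t := by
    have h := (((haw t 0).mul (hab t 0)).add ((haw t 1).mul (hab t 1))).add
      ((haw t 2).mul (hab t 2))
    refine h.congr_deriv ?_
    ring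
  -- rewrite αa and χa
  have hαa : αa = fun s => P s / S s := by
    funext s
    show ((norm3 (w s))⁻¹ • w s) ⬝ᵥ a s / norm3 (w s) = P s / S s
    rw [smul_dotProduct, ← hm s]
    have : w s ⬝ᵥ a s = P s := by simp [hPdef, dotProduct, Fin.sum_univ_three]
    rw [this, smul_eq_mul]
    field_simp
  have hC : ∀ s, w s ⨯₃ a s = ![w s 1 * a s 2 - w s 2 * a s 1,
      w s 2 * a s 0 - w s 0 * a s 2, w s 0 * a s 1 - w s 1 * a s 0] := by
    intro s; rw [cross_apply]
  have hχa : χa = fun s => (S s)⁻¹ • (w s ⨯₃ a s) := by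
    funext s
    show (norm3 (w s))⁻¹ • (((norm3 (w s))⁻¹ • w s) ⨯₃ a s) = (S s)⁻¹ • (w s ⨯₃ a s)
    rw [LinearMap.map_smul₂, smul_smul, ← hm s, mul_inv]
  -- derivative of χa componentwise
  set C : Fin 3 → ℝ → ℝ := fun i s => (w s ⨯₃ a s) i with hCdef
  set D : Fin 3 → ℝ → ℝ := fun i s => (w s ⨯₃ b s) i with hDdef
  have hχ' : HasDerivAt (fun s => (S s)⁻¹ • (w s ⨯₃ a s))
      (fun i => (D i t * S t - C i t * (2 * P t)) / S t ^ 2) t := by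
    rw [hasDerivAt_pi]
    intro i
    have hCs : ∀ s, ((S s)⁻¹ • (w s ⨯₃ a s)) i = C i s / S s := by
      intro s; simp [hCdef, div_eq_inv_mul]
    simp only [hCs]
    fin_cases i
    · have hC0 : HasDerivAt (C 0) (D 0 t) t := by
        have h : HasDerivAt (fun s => w s 1 * a s 2 - w s 2 * a s 1)
            (a t 1 * a t 2 + w t 1 * b t 2 - (a t 2 * a t 1 + w t 2 * b t 1)) t :=
          ((haw t 1).mul (hab t 2)).sub ((haw t 2).mul (hab t 1))
        have e1 : C 0 = fun s => w s 1 * a s 2 - w s 2 * a s 1 := by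
          funext s; simp [hCdef, hC s]
        rw [e1]
        convert h using 1
        simp [hDdef, cross_apply]; ring
      exact hC0.div hS' (hSne t)
    · have hC1 : HasDerivAt (C 1) (D 1 t) t := by
        have h : HasDerivAt (fun s => w s 2 * a s 0 - w s 0 * a s 2)
            (a t 2 * a t 0 + w t 2 * b t 0 - (a t 0 * a t 2 + w t 0 * b t 2)) t :=
          ((haw t 2).mul (hab t 0)).sub ((haw t 0).mul (hab t 2))
        have e1 : C 1 = fun s => w s 2 * a s 0 - w s 0 * a s 2 := by
          funext s; simp [hCdef, hC s]
        rw [e1]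
        convert h using 1
        simp [hDdef, cross_apply]; ring
      exact hC1.div hS' (hSne t)
    · have hC2 : HasDerivAt (C 2) (D 2 t) t := by
        have h : HasDerivAt (fun s => w s 0 * a s 1 - w s 1 * a s 0)
            (a t 0 * a t 1 + w t 0 * b t 1 - (a t 1 * a t 0 + w t 1 * b t 0)) t :=
          ((haw t 0).mul (hab t 1)).sub ((haw t 1).mul (hab t 0))
        have e1 : C 2 = fun s => w s 0 * a s 1 - w s 1 * a s 0 := by
          funext s; simp [hCdef, hC s]
        rw [e1]
        convert h using 1
        simp [hDdef, cross_apply]; ring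
      exact hC2.div hS' (hSne t)
  have hderχ : deriv χa t = fun i => (D i t * S t - C i t * (2 * P t)) / S t ^ 2 := by
    rw [hχa]; exact hχ'.deriv
  have hderα : deriv αa t =
      ((a t 0 * a t 0 + a t 1 * a t 1 + a t 2 * a t 2
        + (w t 0 * b t 0 + w t 1 * b t 1 + w t 2 * b t 2)) * S t - P t * (2 * P t)) / S t ^ 2 := by
    rw [hαa]; exact (hP'.div hS' (hSne t)).deriv
  -- final computation
  have hαat : αa t = P t / S t := by rw [hαa]
  have hχat : χa t = (S t)⁻¹ • (w t ⨯₃ a t) := by rw [hχa]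
  have hαbt : αb t = (w t 0 * b t 0 + w t 1 * b t 1 + w t 2 * b t 2) / S t := by
    show ((norm3 (w t))⁻¹ • w t) ⬝ᵥ b t / norm3 (w t) = _
    rw [smul_dotProduct, ← hm t]
    have : w t ⬝ᵥ b t = w t 0 * b t 0 + w t 1 * b t 1 + w t 2 * b t 2 := by
      simp [dotProduct, Fin.sum_univ_three]
    rw [this, smul_eq_mul]
    field_simp
  have hχbt : χb t = (S t)⁻¹ • (w t ⨯₃ b t) := by
    show (norm3 (w t))⁻¹ • (((norm3 (w t))⁻¹ • w t) ⨯₃ b t) = (S t)⁻¹ • (w t ⨯₃ b t)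
    rw [LinearMap.map_smul₂, smul_smul, ← hm t, mul_inv]
  refine Prod.ext ?_ ?_
  · -- scalar part
    show deriv αa t + (αa t * αa t - χa t ⬝ᵥ χa t) = αb t
    rw [hderα, hαat, hαbt, hχat]
    have hdot : ((S t)⁻¹ • (w t ⨯₃ a t)) ⬝ᵥ ((S t)⁻¹ • (w t ⨯₃ a t))
        = ((w t 1 * a t 2 - w t 2 * a t 1)^2 + (w t 2 * a t 0 - w t 0 * a t 2)^2
          + (w t 0 * a t 1 - w t 1 * a t 0)^2) / S t ^ 2 := by
      rw [smul_dotProduct, dotProduct_smul, hC t]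
      simp only [dotProduct, Fin.sum_univ_three, smul_eq_mul, Matrix.cons_val_zero,
        Matrix.cons_val_one, Matrix.head_cons, Matrix.cons_val_two, Matrix.tail_cons]
      field_simp [hSne t]
    rw [hdot]
    have hSval : S t = w t 0 * w t 0 + w t 1 * w t 1 + w t 2 * w t 2 := by
      rw [hSexp]
    have hPval : P t = w t 0 * a t 0 + w t 1 * a t 1 + w t 2 * a t 2 := rfl
    have hpne : w t 0 * w t 0 + w t 1 * w t 1 + w t 2 * w t 2 ≠ 0 := hSval ▸ hSne t
    rw [hPval, hSval]
    set X := w t 0 * w t 0 + w t 1 * w t 1 + w t 2 * w t 2 with hX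
    field_simp
    rw [hX]
    ring
  · -- vector part
    show deriv χa t + (αa t • χa t + αa t • χa t + χa t ⨯₃ χa t) = χb t
    rw [hderχ, hαat, hχat, hχbt, cross_self]
    funext i
    have hCval : C i t = (w t ⨯₃ a t) i := rfl
    have hDval : D i t = (w t ⨯₃ b t) i := rfl
    simp only [Pi.add_apply, Pi.smul_apply, smul_eq_mul, add_zero, Pi.zero_apply]
    rw [hCval, hDval]
    field_simp [hSne t]
    ring
end
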